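/- Let C ⊆ (2R)ⁿ be an R-submodule of Rⁿ such that (δ,δ,…,δ) ∈ C and ρ(C) ⊆ C. Then the DNA code D = {ψ₂(x) : x ∈ C} ⊆ Σ^{3n} is closed under the reverse map s ↦ sʳ and under the reverse-complement map s ↦ sʳᶜ, every codeword of D has GC-content exactly 2n, and no codeword of D contains a homopolymer run of length greater than 2. -/

import Mathlib

open Polynomial

noncomputable section

/-- The ring `R = ℤ₄[u]/(u³ − 1)`. -/
abbrev R : Type := Polynomial (ZMod 4) ⧸ Ideal.span ({Polynomial.X ^ 3 - 1} : Set (Polynomial (ZMod 4)))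

/-- The image `u` of the variable in `R`. -/
def u : R := Ideal.Quotient.mk _ Polynomial.X

instance : DecidableEq R := Classical.decEq R

lemma u_pow_three : u ^ 3 = 1 := by
  have h : (Ideal.Quotient.mk (Ideal.span ({Polynomial.X ^ 3 - 1} : Set (Polynomial (ZMod 4))))
      (Polynomial.X ^ 3 - 1) : R) = 0 :=
    Ideal.Quotient.eq_zero_iff_mem.mpr (Ideal.subset_span rfl)
  have h2 : (u ^ 3 - 1 : R) = 0 := by
    simpa [u, map_sub, map_pow] using h
  linear_combination h2

/-- The ring automorphism `σ` of `R` determined by `σ(u) = u²`. -/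
def sigmaR : R →+* R :=
  Ideal.Quotient.lift _ (Polynomial.aeval (u ^ 2)).toRingHom (by
    intro p hp
    obtain ⟨q, rfl⟩ := Ideal.mem_span_singleton.mp hp
    have h6 : ((u ^ 2) ^ 3 : R) = 1 := by
      rw [← pow_mul]
      have : (u : R) ^ (2 * 3) = (u ^ 3) ^ 2 := by ring
      rw [this, u_pow_three, one_pow]
    simp [map_mul, map_sub, map_pow, h6])

/-- The element `δ = 2 + 2u + 2u²` of `R`. -/
def δR : R := 2 + 2 * u + 2 * u ^ 2

/-- The map `ρ : Rⁿ → Rⁿ`, reversing coordinates and applying `σ` coordinatewise. -/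
def ρmap (n : ℕ) (x : Fin n → R) : Fin n → R := fun i => sigmaR (x (Fin.rev i))

/-- The 4-letter DNA alphabet. -/
inductive DNA : Type
  | A | C | G | T
deriving DecidableEq, Inhabited, Repr

/-- Watson–Crick complement of a DNA nucleotide. -/
def DNA.compl : DNA → DNA
  | .A => .T
  | .T => .A
  | .C => .G
  | .G => .C

/-- Complement of a DNA string. -/
def complStr (s : List DNA) : List DNA := s.map DNA.compl

/-- Reverse of a DNA string. -/
def revStr (s : List DNA) : List DNA := s.reverse

/-- Reverse-complement of a DNA string. -/
def rcStr (s : List DNA) : List DNA := s.reverse.map DNA.compl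

/-- Hamming distance between two DNA strings (of equal length). -/
def dH (s t : List DNA) : ℕ := ((s.zip t).filter fun p => p.1 ≠ p.2).length

/-- GC-content of a DNA string: the number of positions carrying `G` or `C`. -/
def gcContent (s : List DNA) : ℕ := (s.filter fun d => d = DNA.G ∨ d = DNA.C).length

/-- A DNA string has no homopolymer run of length greater than `2` iff it has no three
consecutive equal symbols. -/
def NoHomopolymer3 (s : List DNA) : Prop := ¬ ∃ (l r : List DNA) (a : DNA), s = l ++ [a, a, a] ++ r

/-- Blockwise extension of a map `ψ : R → Σ³` to vectors over `R`, by concatenation. -/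
def Ψ (ψ : R → List DNA) {n : ℕ} (x : Fin n → R) : List DNA := (List.ofFn x).flatMap ψ

/-- The map `ψ₂` from the ideal `2R` to DNA strings of length `3`
(the restriction of the DNA map of Table I to `2R`; its value outside `2R` is irrelevant). -/
def ψ₂ (x : R) : List DNA :=
  if x = 0 then [.G, .A, .G]
  else if x = 2 then [.C, .G, .A]
  else if x = 2 * u then [.G, .T, .G]
  else if x = 2 * u ^ 2 then [.A, .G, .C]
  else if x = 2 + 2 * u then [.T, .C, .G]
  else if x = 2 + 2 * u ^ 2 then [.C, .A, .C]
  else if x = 2 * u + 2 * u ^ 2 then [.G, .C, .T]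
  else [.C, .T, .C]

/-- The rows of the Reed–Muller type generator matrix `G_{1,m}` over `R` (with parameter `z`):
`Gmat z m i j` is the entry of `G_{1,m}` in row `i` and column `j`.  Here `G_{1,0} = [z]` and
`G_{1,m+1} = [[G_{1,m}, G_{1,m}], [0 … 0, z … z]]`, which for `m = 1` gives
`G_{1,1} = [[z,z],[0,z]]`. -/
def Gmat (z : R) : (m : ℕ) → Fin (m + 1) → Fin (2 ^ m) → R
  | 0, _, _ => z
  | m + 1, i, j =>
    if hi : (i : ℕ) < m + 1 then
      Gmat z m ⟨i, hi⟩ ⟨(j : ℕ) % 2 ^ m, Nat.mod_lt _ (Nat.two_pow_pos m)⟩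
    else if (j : ℕ) < 2 ^ m then 0 else z

/-- The Reed–Muller type code `R(1,m)`: the `R`-submodule of `R^{2^m}` generated by the rows
of `G_{1,m}`. -/
def RM (z : R) (m : ℕ) : Submodule R (Fin (2 ^ m) → R) := Submodule.span R (Set.range (Gmat z m))

/-- Hamming weight of a vector over `R`. -/
def wt {N : ℕ} (c : Fin N → R) : ℕ := (Finset.univ.filter fun j => c j ≠ 0).card

/-- Hamming distance between two vectors over `R`. -/
def hdistR {N : ℕ} (c c' : Fin N → R) : ℕ := (Finset.univ.filter fun j => c j ≠ c' j).card

/-- Coordinate reversal of a vector over `R`. -/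
def revVec {N : ℕ} (c : Fin N → R) : Fin N → R := fun j => c (Fin.rev j)

/-- `a + bu + cu²` as an element of `R`, for `a, b, c ∈ ℤ₄`. -/
def toR (a b c : ZMod 4) : R :=
  algebraMap (ZMod 4) R a + algebraMap (ZMod 4) R b * u + algebraMap (ZMod 4) R c * u ^ 2

end


namespace Stmt11Aux

noncomputable section

lemma algebraMap_eq_mk_C (a : ZMod 4) :
    algebraMap (ZMod 4) R a = Ideal.Quotient.mk _ (Polynomial.C a) := by
  rw [← Polynomial.algebraMap_eq, Ideal.Quotient.mk_algebraMap]

lemma sigma_algebraMap (a : ZMod 4) :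
    sigmaR (algebraMap (ZMod 4) R a) = algebraMap (ZMod 4) R a := by
  conv_lhs => rw [algebraMap_eq_mk_C]
  simp [sigmaR]

lemma sigma_u : sigmaR u = u ^ 2 := by simp [sigmaR, u]

/-- cyclic shift matrix -/
def Pm : Matrix (Fin 3) (Fin 3) (ZMod 4) := !![0,1,0;0,0,1;1,0,0]

lemma Pm_pow_three : Pm ^ 3 = 1 := by decide

def phiM : R →+* Matrix (Fin 3) (Fin 3) (ZMod 4) :=
  Ideal.Quotient.lift _ (Polynomial.aeval Pm).toRingHom (by
    intro p hp
    obtain ⟨q, rfl⟩ := Ideal.mem_span_singleton.mp hp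
    simp [map_mul, map_sub, map_pow, Pm_pow_three])

lemma phiM_u : phiM u = Pm := by simp [phiM, u]

lemma phiM_algebraMap (a : ZMod 4) :
    phiM (algebraMap (ZMod 4) R a) = a • (1 : Matrix (Fin 3) (Fin 3) (ZMod 4)) := by
  conv_lhs => rw [algebraMap_eq_mk_C]
  simp [phiM, Algebra.algebraMap_eq_smul_one]

lemma phiM_toR (a b c : ZMod 4) : phiM (toR a b c) = !![a,b,c; c,a,b; b,c,a] := by
  rw [toR, map_add, map_add, map_mul, map_mul, map_pow, phiM_u,
    phiM_algebraMap, phiM_algebraMap, phiM_algebraMap]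
  ext i j
  fin_cases i <;> fin_cases j <;>
    simp [Pm, pow_two, Matrix.mul_apply, Fin.sum_univ_three, Matrix.one_apply,
      Matrix.vecHead, Matrix.vecTail]

lemma toR_eq_iff {a b c a' b' c' : ZMod 4} :
    toR a b c = toR a' b' c' ↔ a = a' ∧ b = b' ∧ c = c' := by
  constructor
  · intro h
    have h2 := congrArg phiM h
    rw [phiM_toR, phiM_toR] at h2
    refine ⟨?_, ?_, ?_⟩
    · simpa using congrFun (congrFun h2 0) 0
    · simpa using congrFun (congrFun h2 0) 1
    · simpa using congrFun (congrFun h2 0) 2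
  · rintro ⟨rfl, rfl, rfl⟩; rfl

lemma toR_add (a b c a' b' c' : ZMod 4) :
    toR a b c + toR a' b' c' = toR (a + a') (b + b') (c + c') := by
  simp only [toR, map_add]; ring

lemma exists_toR (x : R) : ∃ a b c : ZMod 4, x = toR a b c := by
  obtain ⟨p, rfl⟩ := Ideal.Quotient.mk_surjective x
  induction p using Polynomial.induction_on' with
  | add p q hp hq =>
    obtain ⟨a, b, c, hp⟩ := hp
    obtain ⟨a', b', c', hq⟩ := hq
    exact ⟨a + a', b + b', c + c', by rw [map_add, hp, hq, toR_add]⟩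
  | monomial k a =>
    have hmk : Ideal.Quotient.mk (Ideal.span ({Polynomial.X ^ 3 - 1} :
        Set (Polynomial (ZMod 4)))) (Polynomial.monomial k a)
        = algebraMap (ZMod 4) R a * u ^ k := by
      rw [← Polynomial.C_mul_X_pow_eq_monomial, map_mul, map_pow, algebraMap_eq_mk_C]
      rfl
    have hu : (u : R) ^ k = u ^ (k % 3) := by
      conv_lhs => rw [← Nat.div_add_mod k 3]
      rw [pow_add, pow_mul, u_pow_three, one_pow, one_mul]
    have hk : k % 3 = 0 ∨ k % 3 = 1 ∨ k % 3 = 2 := by omega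
    have hmul : ∀ x y z : ZMod 4, algebraMap (ZMod 4) R a * toR x y z
        = toR (a * x) (a * y) (a * z) := by
      intro x y z; simp only [toR, map_mul]; ring
    rcases hk with h | h | h
    · refine ⟨a * 1, a * 0, a * 0, ?_⟩
      rw [hmk, hu, h, pow_zero, ← hmul]
      congr 1
      simp [toR]
    · refine ⟨a * 0, a * 1, a * 0, ?_⟩
      rw [hmk, hu, h, pow_one, ← hmul]
      congr 1
      simp [toR]
    · refine ⟨a * 0, a * 0, a * 1, ?_⟩
      rw [hmk, hu, h, ← hmul]
      congr 1
      simp [toR]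

lemma mem_two {x : R} (hx : x ∈ Ideal.span {(2 : R)}) :
    ∃ a b c : ZMod 4, (a = 0 ∨ a = 2) ∧ (b = 0 ∨ b = 2) ∧ (c = 0 ∨ c = 2) ∧ x = toR a b c := by
  obtain ⟨y, rfl⟩ := Ideal.mem_span_singleton.mp hx
  obtain ⟨a, b, c, rfl⟩ := exists_toR y
  have h2 : (2 : R) = algebraMap (ZMod 4) R 2 := by rw [map_ofNat]
  have key : ∀ d : ZMod 4, 2 * d = 0 ∨ 2 * d = 2 := by decide
  refine ⟨2 * a, 2 * b, 2 * c, key a, key b, key c, ?_⟩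
  rw [h2]; simp only [toR, map_mul]; ring

-- canonical forms of the eight elements of 2R and the constants in ψ₂
lemma eq0 : (0 : R) = toR 0 0 0 := by simp [toR]
lemma eq2 : (2 : R) = toR 2 0 0 := by
  have h2 : (2 : R) = algebraMap (ZMod 4) R 2 := by rw [map_ofNat]
  rw [h2]; simp [toR]
lemma eq2u : (2 : R) * u = toR 0 2 0 := by
  have h2 : (2 : R) = algebraMap (ZMod 4) R 2 := by rw [map_ofNat]
  rw [h2]; simp [toR]
lemma eq2u2 : (2 : R) * u ^ 2 = toR 0 0 2 := by
  have h2 : (2 : R) = algebraMap (ZMod 4) R 2 := by rw [map_ofNat]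
  rw [h2]; simp [toR]
lemma eq22u : (2 : R) + 2 * u = toR 2 2 0 := by
  rw [eq2u, eq2, toR_add]
  exact toR_eq_iff.mpr (by decide)
lemma eq22u2 : (2 : R) + 2 * u ^ 2 = toR 2 0 2 := by
  rw [eq2u2, eq2, toR_add]
  exact toR_eq_iff.mpr (by decide)
lemma eq2u2u2 : (2 : R) * u + 2 * u ^ 2 = toR 0 2 2 := by
  rw [eq2u2, eq2u, toR_add]
  exact toR_eq_iff.mpr (by decide)
lemma eqδ : δR = toR 2 2 2 := by
  rw [δR, eq2u2, eq2u, eq2, toR_add, toR_add]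
  exact toR_eq_iff.mpr (by decide)

-- conditions in ψ₂, as iffs on coefficients
lemma c0 {a b c : ZMod 4} : toR a b c = 0 ↔ a = 0 ∧ b = 0 ∧ c = 0 := by
  rw [eq0, toR_eq_iff]
lemma c1 {a b c : ZMod 4} : toR a b c = 2 ↔ a = 2 ∧ b = 0 ∧ c = 0 := by
  rw [eq2, toR_eq_iff]
lemma c2 {a b c : ZMod 4} : toR a b c = 2 * u ↔ a = 0 ∧ b = 2 ∧ c = 0 := by
  rw [eq2u, toR_eq_iff]
lemma c3 {a b c : ZMod 4} : toR a b c = 2 * u ^ 2 ↔ a = 0 ∧ b = 0 ∧ c = 2 := by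
  rw [eq2u2, toR_eq_iff]
lemma c4 {a b c : ZMod 4} : toR a b c = 2 + 2 * u ↔ a = 2 ∧ b = 2 ∧ c = 0 := by
  rw [eq22u, toR_eq_iff]
lemma c5 {a b c : ZMod 4} : toR a b c = 2 + 2 * u ^ 2 ↔ a = 2 ∧ b = 0 ∧ c = 2 := by
  rw [eq22u2, toR_eq_iff]
lemma c6 {a b c : ZMod 4} : toR a b c = 2 * u + 2 * u ^ 2 ↔ a = 0 ∧ b = 2 ∧ c = 2 := by
  rw [eq2u2u2, toR_eq_iff]

lemma sigma_toR (a b c : ZMod 4) : sigmaR (toR a b c) = toR a c b := by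
  simp only [toR, map_add, map_mul, map_pow, sigma_u, sigma_algebraMap]
  linear_combination (algebraMap (ZMod 4) R c * u) * u_pow_three

lemma u2_mul_toR (a b c : ZMod 4) : u ^ 2 * toR a b c = toR b c a := by
  simp only [toR]
  linear_combination (algebraMap (ZMod 4) R b + algebraMap (ZMod 4) R c * u) * u_pow_three

lemma toR_add_delta (a b c : ZMod 4) : toR a b c + δR = toR (a + 2) (b + 2) (c + 2) := by
  rw [eqδ, toR_add]

/-- predicate: x lies in the explicit eight element set -/
def Is2 (x : R) : Prop :=
  ∃ a b c : ZMod 4, (a = 0 ∨ a = 2) ∧ (b = 0 ∨ b = 2) ∧ (c = 0 ∨ c = 2) ∧ x = toR a b c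

lemma rev_psi {x : R} (h : Is2 x) : (ψ₂ x).reverse = ψ₂ (u ^ 2 * sigmaR x) := by
  obtain ⟨a, b, c, ha, hb, hc, rfl⟩ := h
  rw [sigma_toR, u2_mul_toR]
  rcases ha with rfl | rfl <;> rcases hb with rfl | rfl <;> rcases hc with rfl | rfl <;>
    simp (config := { decide := true }) [ψ₂, c0, c1, c2, c3, c4, c5, c6]

lemma compl_psi {x : R} (h : Is2 x) : (ψ₂ x).map DNA.compl = ψ₂ (x + δR) := by
  obtain ⟨a, b, c, ha, hb, hc, rfl⟩ := h
  rw [toR_add_delta]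
  rcases ha with rfl | rfl <;> rcases hb with rfl | rfl <;> rcases hc with rfl | rfl <;>
    simp (config := { decide := true }) [ψ₂, c0, c1, c2, c3, c4, c5, c6, DNA.compl]

lemma gc_psi (x : R) : gcContent (ψ₂ x) = 2 := by
  unfold ψ₂; split_ifs <;> rfl

lemma codon_psi (x : R) : ∃ d₁ d₂ d₃ : DNA, ψ₂ x = [d₁, d₂, d₃] ∧ d₁ ≠ d₂ ∧ d₂ ≠ d₃ := by
  unfold ψ₂; split_ifs <;> exact ⟨_, _, _, rfl, by decide, by decide⟩

lemma gc_append (l₁ l₂ : List DNA) : gcContent (l₁ ++ l₂) = gcContent l₁ + gcContent l₂ := by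
  simp [gcContent, List.filter_append]

lemma gc_flatten (L : List (List DNA)) (h : ∀ s ∈ L, gcContent s = 2) :
    gcContent L.flatten = 2 * L.length := by
  induction L with
  | nil => rfl
  | cons s L ih =>
    rw [List.flatten_cons, gc_append, h s (List.mem_cons_self),
      ih (fun t ht => h t (List.mem_cons_of_mem _ ht)), List.length_cons]
    ring

lemma noHomo_flatten (L : List (List DNA))
    (h : ∀ s ∈ L, ∃ d₁ d₂ d₃ : DNA, s = [d₁, d₂, d₃] ∧ d₁ ≠ d₂ ∧ d₂ ≠ d₃) :
    NoHomopolymer3 L.flatten ∧ ∀ a b t, L.flatten = a :: b :: t → a ≠ b := by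
  induction L with
  | nil =>
    constructor
    · rintro ⟨l, r, a, hdec⟩
      simp at hdec
    · intro a b t hdec
      simp at hdec
  | cons s L ih =>
    obtain ⟨d₁, d₂, d₃, hs, h12, h23⟩ := h s (List.mem_cons_self)
    have ihL := ih (fun t ht => h t (List.mem_cons_of_mem _ ht))
    have hfl : (s :: L).flatten = d₁ :: d₂ :: d₃ :: L.flatten := by
      rw [List.flatten_cons, hs]; rfl
    constructor
    · rintro ⟨l, r, a, hdec⟩
      rw [hfl] at hdec
      match l, hdec with
      | [], hdec =>
        simp only [List.nil_append, List.cons_append, List.cons.injEq] at hdec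
        exact h12 (hdec.1.trans hdec.2.1.symm)
      | [x], hdec =>
        simp only [List.cons_append, List.nil_append, List.cons.injEq] at hdec
        exact h23 (hdec.2.1.trans hdec.2.2.1.symm)
      | [x, y], hdec =>
        simp only [List.cons_append, List.nil_append, List.cons.injEq] at hdec
        exact ihL.2 a a _ hdec.2.2.2 rfl
      | x :: y :: z :: l', hdec =>
        simp only [List.cons_append, List.cons.injEq] at hdec
        exact ihL.1 ⟨l', r, a, by simpa using hdec.2.2.2⟩
    · intro a b t hdec
      rw [hfl] at hdec
      simp only [List.cons.injEq] at hdec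
      obtain ⟨h1, h2, -⟩ := hdec
      rw [← h1, ← h2]
      exact h12

lemma reverse_ofFn {α : Type*} {m : ℕ} (g : Fin m → α) :
    (List.ofFn g).reverse = List.ofFn (g ∘ Fin.rev) := by
  apply List.ext_getElem
  · simp
  · intro i h1 h2
    simp only [List.getElem_reverse, List.getElem_ofFn, Function.comp_apply]
    congr 1
    simp only [List.length_reverse, List.length_ofFn] at h1 h2 ⊢
    ext
    simp [Fin.rev]
    omega

end

end Stmt11Aux

/-- If `C ⊆ (2R)ⁿ` is an `R`-submodule of `Rⁿ` with `(δ, …, δ) ∈ C` and `ρ(C) ⊆ C`, then the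
DNA code `D = ψ₂(C)` is closed under reverse and reverse-complement, every codeword has
GC-content exactly `2n`, and no codeword contains a homopolymer run of length greater
than 2. -/
theorem stmt11 (n : ℕ) (C : Submodule R (Fin n → R))
    (hsub : ∀ x ∈ C, ∀ i : Fin n, x i ∈ Ideal.span {(2 : R)})
    (hδ : (fun _ : Fin n => δR) ∈ C)
    (hρ : ∀ y ∈ C, ρmap n y ∈ C)
    (D : Set (List DNA)) (hD : D = (fun x : Fin n → R => Ψ ψ₂ x) '' (C : Set (Fin n → R))) :
    (∀ s ∈ D, revStr s ∈ D) ∧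
    (∀ s ∈ D, rcStr s ∈ D) ∧
    (∀ s ∈ D, gcContent s = 2 * n) ∧
    (∀ s ∈ D, NoHomopolymer3 s) := by
  subst hD
  have hIs2 : ∀ x ∈ C, ∀ i : Fin n, Stmt11Aux.Is2 (x i) := fun x hx i =>
    Stmt11Aux.mem_two (hsub x hx i)
  have hrev : ∀ x ∈ C, revStr (Ψ ψ₂ x) = Ψ ψ₂ (u ^ 2 • ρmap n x) := by
    intro x hx
    unfold revStr Ψ
    simp only [List.flatMap_def, List.map_ofFn, List.reverse_flatten,
      Stmt11Aux.reverse_ofFn]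
    congr 1
    congr 1
    funext i
    show (ψ₂ (x (Fin.rev i))).reverse = ψ₂ ((u ^ 2 • ρmap n x) i)
    have h1 : (u ^ 2 • ρmap n x) i = u ^ 2 * sigmaR (x (Fin.rev i)) := rfl
    rw [h1]
    exact Stmt11Aux.rev_psi (hIs2 x hx (Fin.rev i))
  have hcompl : ∀ x ∈ C, (Ψ ψ₂ x).map DNA.compl = Ψ ψ₂ (x + fun _ => δR) := by
    intro x hx
    unfold Ψ
    simp only [List.flatMap_def, List.map_ofFn, List.map_flatten]
    congr 1
    congr 1
    funext i
    simp only [Function.comp_apply, Pi.add_apply]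
    exact Stmt11Aux.compl_psi (hIs2 x hx i)
  refine ⟨?_, ?_, ?_, ?_⟩
  · rintro s ⟨x, hx, rfl⟩
    exact ⟨u ^ 2 • ρmap n x, C.smul_mem _ (hρ x hx), (hrev x hx).symm⟩
  · rintro s ⟨x, hx, rfl⟩
    have hy : u ^ 2 • ρmap n x ∈ C := C.smul_mem _ (hρ x hx)
    refine ⟨u ^ 2 • ρmap n x + fun _ => δR, C.add_mem hy hδ, ?_⟩
    have h2 : rcStr (Ψ ψ₂ x) = (revStr (Ψ ψ₂ x)).map DNA.compl := rfl
    rw [h2, hrev x hx, hcompl _ hy]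
  · rintro s ⟨x, hx, rfl⟩
    show gcContent ((List.ofFn x).flatMap ψ₂) = 2 * n
    rw [List.flatMap_def, Stmt11Aux.gc_flatten]
    · simp
    · intro t ht
      obtain ⟨r, -, rfl⟩ := List.mem_map.mp ht
      exact Stmt11Aux.gc_psi r
  · rintro s ⟨x, hx, rfl⟩
    show NoHomopolymer3 ((List.ofFn x).flatMap ψ₂)
    rw [List.flatMap_def]
    refine (Stmt11Aux.noHomo_flatten _ ?_).1
    intro t ht
    obtain ⟨r, -, rfl⟩ := List.mem_map.mp ht
    exact Stmt11Aux.codon_psi r
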